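/- Let D = S + R·M_w with integers 0 ≤ S < M_w and R ≥ 0. If S > 0, then A*_{d_w}(D) ≤ q^R · (1 + |w⁻¹([S]_w)|). If S = 0, then A*_{d_w}(D) ≤ q^R. In either case A*_{d_w}(D) < q^{R+1}. -/

import Mathlib

set_option linter.unusedSectionVars false

open scoped Classical

noncomputable section

variable {F : Type*} [Field F] [Fintype F]

def IsWeight (w : F → ℕ) : Prop :=
  (∀ a : F, w a = 0 ↔ a = 0) ∧ (∀ a : F, w (-a) = w a) ∧
    (∀ a b : F, w (a + b) ≤ w a + w b)

def Mw (w : F → ℕ) : ℕ := Finset.univ.sup w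

def mw (w : F → ℕ) : ℕ := sInf {s | ∃ a : F, a ≠ 0 ∧ w a = s}

def rho {n : ℕ} (u : Fin n → F) : ℕ :=
  (Finset.univ.filter fun j => u j ≠ 0).sup fun j => (j : ℕ) + 1

lemma rho_le {n : ℕ} (u : Fin n → F) : rho u ≤ n :=
  Finset.sup_le fun j _ => j.isLt

def chainWeight {n : ℕ} (w : F → ℕ) (u : Fin n → F) : ℕ :=
  if h : rho u = 0 then 0
  else w (u ⟨rho u - 1,
        lt_of_lt_of_le (Nat.sub_lt (Nat.pos_of_ne_zero h) Nat.one_pos) (rho_le u)⟩)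
      + (rho u - 1) * Mw w

def dChain {n : ℕ} (w : F → ℕ) (u v : Fin n → F) : ℕ := chainWeight w (u - v)

def ballW {n : ℕ} (w : F → ℕ) (x : Fin n → F) (r : ℕ) : Finset (Fin n → F) :=
  Finset.univ.filter fun v => dChain w x v ≤ r

def diamW {n : ℕ} (w : F → ℕ) (A : Finset (Fin n → F)) : ℕ :=
  (A ×ˢ A).sup fun p => dChain w p.1 p.2

def AstarW (w : F → ℕ) (n D : ℕ) : ℕ :=
  Finset.univ.sup fun A : Finset (Fin n → F) => if diamW w A ≤ D then A.card else 0

def winv (w : F → ℕ) (S : ℕ) : Finset F :=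
  Finset.univ.filter fun a => a ≠ 0 ∧ w a ≤ S

def dP {n : ℕ} (C : Finset (Fin n → F)) : ℕ :=
  sInf {s | ∃ x ∈ C, ∃ y ∈ C, x ≠ y ∧ rho (x - y) = s}

def dW {n : ℕ} (w : F → ℕ) (C : Finset (Fin n → F)) : ℕ :=
  sInf {s | ∃ x ∈ C, ∃ y ∈ C, x ≠ y ∧ dChain w x y = s}

def floorW (w : F → ℕ) (n D : ℕ) : ℕ :=
  (Finset.univ.filter fun u : Fin n → F => chainWeight w u < D).sup (chainWeight w)

def nonArch (w : F → ℕ) : Prop := ∀ a b : F, w (a + b) ≤ max (w a) (w b)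

def Sw (w : F → ℕ) : ℕ :=
  if nonArch w then Mw w
  else sInf {s | ∃ a b : F, max (w a) (w b) < w (a - b) ∧ max (w a) (w b) = s}

def WwCond (w : F → ℕ) (S : ℕ) (K : Finset F) : Prop :=
  (∀ a ∈ K, Sw w ≤ w a ∧ w a ≤ S) ∧
  (∀ a ∈ K, ∀ b : F, w b ≤ Sw w - 1 → w (a - b) ≤ S) ∧
  (∀ a ∈ K, ∀ b ∈ K, w (a - b) ≤ S)

def WwCard (w : F → ℕ) (S : ℕ) : ℕ :=
  Finset.univ.sup fun K : Finset F => if WwCond w S K then K.card else 0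

def idealOf {n : ℕ} (P : PartialOrder (Fin n)) (u : Fin n → F) : Finset (Fin n) :=
  Finset.univ.filter fun j => ∃ i : Fin n, u i ≠ 0 ∧ P.le j i

def maxOf {n : ℕ} (P : PartialOrder (Fin n)) (u : Fin n → F) : Finset (Fin n) :=
  (idealOf P u).filter fun j => ∀ k ∈ idealOf P u, P.le j k → j = k

def posetWeight {n : ℕ} (P : PartialOrder (Fin n)) (w : F → ℕ) (u : Fin n → F) : ℕ :=
  (∑ i ∈ maxOf P u, w (u i)) + Mw w * ((idealOf P u) \ (maxOf P u)).card

def dPoset {n : ℕ} (P : PartialOrder (Fin n)) (w : F → ℕ) (u v : Fin n → F) : ℕ :=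
  posetWeight P w (u - v)

def ballP {n : ℕ} (P : PartialOrder (Fin n)) (w : F → ℕ) (x : Fin n → F) (r : ℕ) :
    Finset (Fin n → F) :=
  Finset.univ.filter fun v => dPoset P w x v ≤ r

def diamP {n : ℕ} (P : PartialOrder (Fin n)) (w : F → ℕ) (A : Finset (Fin n → F)) : ℕ :=
  (A ×ˢ A).sup fun p => dPoset P w p.1 p.2

end

section Aux

variable {F : Type*} [Field F] [Fintype F]

lemma rho_ge {n : ℕ} (u : Fin n → F) (j : Fin n) (hu : u j ≠ 0) :
    (j : ℕ) + 1 ≤ rho u :=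
  Finset.le_sup (f := fun j : Fin n => (j : ℕ) + 1) (by simp [hu])

lemma rho_spec {n : ℕ} (u : Fin n → F) (h : rho u ≠ 0) :
    ∃ j : Fin n, u j ≠ 0 ∧ (j : ℕ) + 1 = rho u := by
  classical
  have hne : (Finset.univ.filter fun j => u j ≠ 0).Nonempty := by
    by_contra hc
    rw [Finset.not_nonempty_iff_eq_empty] at hc
    have : rho u = 0 := by simp [rho, hc]
    exact h this
  obtain ⟨j, hj, hje⟩ := Finset.exists_mem_eq_sup _ hne (fun j : Fin n => (j : ℕ) + 1)
  exact ⟨j, (Finset.mem_filter.mp hj).2, hje.symm⟩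

lemma key_lemma {n : ℕ} (w : F → ℕ) (hw : IsWeight w) {S R : ℕ} (hS : S < Mw w)
    (u : Fin n → F) (hd : chainWeight w u ≤ S + R * Mw w) :
    (∀ j : Fin n, R < (j : ℕ) → u j = 0) ∧ (∀ j : Fin n, (j : ℕ) = R → w (u j) ≤ S) := by
  by_cases h0 : rho u = 0
  · have hz : ∀ j : Fin n, u j = 0 := by
      intro j
      by_contra hj
      have := rho_ge u j hj
      omega
    refine ⟨fun j _ => hz j, fun j _ => ?_⟩
    rw [hz j, (hw.1 0).mpr rfl]
    exact Nat.zero_le _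
  · have hlt : rho u - 1 < n :=
      lt_of_lt_of_le (Nat.sub_lt (Nat.pos_of_ne_zero h0) Nat.one_pos) (rho_le u)
    have hcw : chainWeight w u = w (u ⟨rho u - 1, hlt⟩) + (rho u - 1) * Mw w := by
      rw [chainWeight, dif_neg h0]
    rw [hcw] at hd
    have htop : u ⟨rho u - 1, hlt⟩ ≠ 0 := by
      obtain ⟨j, hj, hje⟩ := rho_spec u h0
      have hj' : j = (⟨rho u - 1, hlt⟩ : Fin n) := by
        ext
        simp only []
        omega
      rwa [← hj']
    have hwtop : 1 ≤ w (u ⟨rho u - 1, hlt⟩) :=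
      Nat.one_le_iff_ne_zero.mpr (fun hh => htop ((hw.1 _).mp hh))
    have hρle : rho u ≤ R + 1 := by
      by_contra hc
      push_neg at hc
      have h1 : (R + 1) * Mw w ≤ (rho u - 1) * Mw w :=
        Nat.mul_le_mul_right _ (by omega)
      have h2 : (R + 1) * Mw w = R * Mw w + Mw w := by ring
      omega
    constructor
    · intro j hj
      by_contra hc
      have := rho_ge u j hc
      omega
    · intro j hj
      by_cases hz : u j = 0
      · rw [hz, (hw.1 0).mpr rfl]; exact Nat.zero_le _
      · have h1 := rho_ge u j hz
        have hρ1 : rho u = R + 1 := by omega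
        have hje : (⟨rho u - 1, hlt⟩ : Fin n) = j := by
          ext
          simp only []
          omega
        rw [← hje]
        have hmul : (rho u - 1) * Mw w = R * Mw w := by
          congr 1
          omega
        omega

lemma mem_winv {S : ℕ} {w : F → ℕ} {a : F} : a ∈ winv w S ↔ a ≠ 0 ∧ w a ≤ S := by
  simp [winv]

lemma dChain_le_diam {n D : ℕ} (w : F → ℕ) {A : Finset (Fin n → F)} {x y : Fin n → F}
    (hx : x ∈ A) (hy : y ∈ A) (hd : diamW w A ≤ D) : dChain w x y ≤ D := by
  rw [diamW] at hd
  exact le_trans (Finset.le_sup (b := (x, y))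
    (f := fun p : (Fin n → F) × (Fin n → F) => dChain w p.1 p.2)
    (Finset.mem_product.mpr ⟨hx, hy⟩)) hd

lemma card_le_of_agree {n R : ℕ} (A : Finset (Fin n → F))
    (h : ∀ x ∈ A, ∀ y ∈ A, ∀ j : Fin n, R ≤ (j : ℕ) → x j = y j) :
    A.card ≤ Fintype.card F ^ R := by
  classical
  have hinj : Set.InjOn (fun x : Fin n → F => fun i : Fin R =>
      if h' : (i : ℕ) < n then x ⟨i, h'⟩ else 0) A := by
    intro x hx y hy hxy
    funext j
    by_cases hjR : (j : ℕ) < R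
    · have := congrFun hxy ⟨(j : ℕ), hjR⟩
      simpa [j.isLt] using this
    · exact h x hx y hy j (not_lt.mp hjR)
  calc A.card ≤ (Finset.univ : Finset (Fin R → F)).card :=
        Finset.card_le_card_of_injOn _ (fun x _ => Finset.mem_univ _) hinj
    _ = Fintype.card F ^ R := by simp

lemma card_le_of_agree' {n R : ℕ} (S : ℕ) (w : F → ℕ) (hw : IsWeight w)
    (A : Finset (Fin n → F))
    (h1 : ∀ x ∈ A, ∀ y ∈ A, ∀ j : Fin n, R < (j : ℕ) → x j = y j)
    (h2 : ∀ x ∈ A, ∀ y ∈ A, ∀ j : Fin n, (j : ℕ) = R → w (x j - y j) ≤ S) :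
    A.card ≤ Fintype.card F ^ R * (1 + (winv w S).card) := by
  classical
  rcases A.eq_empty_or_nonempty with rfl | ⟨x₀, hx₀⟩
  · simp
  set Φ : (Fin n → F) → (Fin R → F) × F := fun x =>
    ((fun i : Fin R => if h' : (i : ℕ) < n then x ⟨i, h'⟩ else 0),
      if h' : R < n then x ⟨R, h'⟩ - x₀ ⟨R, h'⟩ else 0) with hΦ
  have hmaps : ∀ x ∈ A, Φ x ∈
      (Finset.univ : Finset (Fin R → F)) ×ˢ insert (0 : F) (winv w S) := by
    intro x hx
    rw [Finset.mem_product]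
    refine ⟨Finset.mem_univ _, ?_⟩
    simp only [hΦ]
    split_ifs with h'
    · by_cases hz : x ⟨R, h'⟩ - x₀ ⟨R, h'⟩ = 0
      · rw [hz]; exact Finset.mem_insert_self _ _
      · exact Finset.mem_insert_of_mem
          (mem_winv.mpr ⟨hz, h2 x hx x₀ hx₀ ⟨R, h'⟩ rfl⟩)
    · exact Finset.mem_insert_self _ _
  have hinj : Set.InjOn Φ A := by
    intro x hx y hy hxy
    rw [hΦ, Prod.mk.injEq] at hxy
    obtain ⟨hxy1, hxy2⟩ := hxy
    funext j
    rcases lt_trichotomy ((j : ℕ)) R with hjR | hjR | hjR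
    · have := congrFun hxy1 ⟨(j : ℕ), hjR⟩
      simpa [j.isLt] using this
    · have hRn : R < n := hjR ▸ j.isLt
      rw [dif_pos hRn, dif_pos hRn] at hxy2
      have hje : (⟨R, hRn⟩ : Fin n) = j := by ext; exact hjR.symm
      have := sub_left_injective hxy2
      rwa [hje] at this
    · exact h1 x hx y hy j hjR
  calc A.card ≤ ((Finset.univ : Finset (Fin R → F)) ×ˢ insert (0 : F) (winv w S)).card :=
        Finset.card_le_card_of_injOn Φ hmaps hinj
    _ = Fintype.card F ^ R * (insert (0 : F) (winv w S)).card := by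
        rw [Finset.card_product]; simp
    _ ≤ Fintype.card F ^ R * (1 + (winv w S).card) :=
        Nat.mul_le_mul_left _ (le_trans (Finset.card_insert_le _ _) (by omega))

end Aux

theorem stmt6 {F : Type*} [Field F] [Fintype F] {n : ℕ} (hn : 1 ≤ n)
    (w : F → ℕ) (hw : IsWeight w) (S R : ℕ) (hS : S < Mw w) :
    (0 < S → AstarW w n (S + R * Mw w) ≤ Fintype.card F ^ R * (1 + (winv w S).card)) ∧
    (S = 0 → AstarW w n (S + R * Mw w) ≤ Fintype.card F ^ R) ∧
    AstarW w n (S + R * Mw w) < Fintype.card F ^ (R + 1) := by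
  classical
  -- basic facts
  obtain ⟨hw1, hw2, hw3⟩ := hw
  have hq1 : 1 < Fintype.card F := Fintype.one_lt_card
  -- an element of maximal weight
  obtain ⟨amax, -, hamax⟩ :=
    Finset.exists_mem_eq_sup (Finset.univ : Finset F) Finset.univ_nonempty w
  have hamax' : w amax = Mw w := hamax.symm
  have hamaxne : amax ≠ 0 := by
    intro hc
    rw [hc, (hw1 0).mpr rfl] at hamax'
    omega
  -- bound on winv
  have hwinv : 1 + (winv w S).card ≤ Fintype.card F - 1 := by
    have hsub : insert (0 : F) (winv w S) ⊆ Finset.univ.erase amax := by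
      intro a ha
      rcases Finset.mem_insert.mp ha with rfl | ha
      · exact Finset.mem_erase.mpr ⟨Ne.symm hamaxne, Finset.mem_univ _⟩
      · obtain ⟨hane, haw⟩ := mem_winv.mp ha
        refine Finset.mem_erase.mpr ⟨?_, Finset.mem_univ _⟩
        intro hc
        rw [hc, hamax'] at haw
        omega
    have h0 : (0 : F) ∉ winv w S := by
      intro hc
      exact (mem_winv.mp hc).1 rfl
    have := Finset.card_le_card hsub
    rw [Finset.card_insert_of_notMem h0, Finset.card_erase_of_mem (Finset.mem_univ _),
      Finset.card_univ] at this
    omega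
  -- the main bound for S > 0 (in fact for all S)
  have hmain : AstarW w n (S + R * Mw w) ≤ Fintype.card F ^ R * (1 + (winv w S).card) := by
    apply Finset.sup_le
    intro A _
    split_ifs with hdiam
    · apply card_le_of_agree' S w ⟨hw1, hw2, hw3⟩ A
      · intro x hx y hy j hj
        have hle : dChain w x y ≤ S + R * Mw w :=
          dChain_le_diam w hx hy hdiam
        have h' : x j - y j = 0 := (key_lemma w ⟨hw1, hw2, hw3⟩ hS (x - y) hle).1 j hj
        exact sub_eq_zero.mp h'
      · intro x hx y hy j hj
        have hle : dChain w x y ≤ S + R * Mw w :=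
          dChain_le_diam w hx hy hdiam
        exact (key_lemma w ⟨hw1, hw2, hw3⟩ hS (x - y) hle).2 j hj
    · exact Nat.zero_le _
  have hmain0 : S = 0 → AstarW w n (S + R * Mw w) ≤ Fintype.card F ^ R := by
    intro hS0
    apply Finset.sup_le
    intro A _
    split_ifs with hdiam
    · apply card_le_of_agree A
      intro x hx y hy j hj
      have hle : dChain w x y ≤ S + R * Mw w :=
        dChain_le_diam w hx hy hdiam
      have hk := key_lemma w ⟨hw1, hw2, hw3⟩ hS (x - y) hle
      rcases eq_or_lt_of_le hj with hj' | hj'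
      · have := hk.2 j hj'.symm
        rw [hS0] at this
        have hz : x j - y j = 0 := (hw1 _).mp (Nat.le_zero.mp this)
        exact sub_eq_zero.mp hz
      · have := hk.1 j hj'
        exact sub_eq_zero.mp this
    · exact Nat.zero_le _
  refine ⟨fun _ => hmain, hmain0, ?_⟩
  calc AstarW w n (S + R * Mw w) ≤ Fintype.card F ^ R * (1 + (winv w S).card) := hmain
    _ ≤ Fintype.card F ^ R * (Fintype.card F - 1) :=
        Nat.mul_le_mul_left _ hwinv
    _ < Fintype.card F ^ R * Fintype.card F := by
        have h0 : 0 < Fintype.card F ^ R := pow_pos (by omega) R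
        exact mul_lt_mul_of_pos_left (by omega) h0
    _ = Fintype.card F ^ (R + 1) := (pow_succ _ _).symm
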